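/- Let T be a finite tree (a connected acyclic simple graph on a finite vertex type), and let 𝔽 be a finite nonempty family of subgraphs of T such that: each member of 𝔽 is connected and contains at least one edge; the edge sets of the members of 𝔽 partition the edge set of T; and any two distinct members of 𝔽 share at most one vertex (where the vertex set of a member is the set of endpoints of its edges). Then there exists a member F ∈ 𝔽 such that the intersection of the vertex set of F with the union of the vertex sets of all the other members of 𝔽 contains at most one vertex. -/

import Mathlib

open scoped Classical

open Finset SimpleGraph

private lemma subgraph_coe_isAcyclic {V : Type*} {G : SimpleGraph V}
    (hacyc : G.IsAcyclic) (F : G.Subgraph) : F.coe.IsAcyclic := by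
  intro v c hc
  exact hacyc (c.map F.hom) (hc.map SimpleGraph.Subgraph.hom_injective)

private lemma support_eq_verts_of_connected {V : Type*} {G : SimpleGraph V}
    {F : G.Subgraph} (hc : F.Connected) (he : F.edgeSet.Nonempty) :
    F.support = F.verts := by
  refine Set.Subset.antisymm F.support_subset_verts (fun v hv => ?_)
  obtain ⟨e, heF⟩ := he
  induction e with
  | h a b =>
    rw [SimpleGraph.Subgraph.mem_edgeSet] at heF
    have ha : a ∈ F.verts := heF.fst_mem
    by_cases hva : v = a
    · subst hva; exact ⟨b, heF⟩
    · obtain ⟨p⟩ := hc ⟨v, hv⟩ ⟨a, ha⟩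
      have hnn : ¬ p.Nil := SimpleGraph.Walk.not_nil_of_ne (by simpa using hva)
      have hadj := p.adj_snd hnn
      exact ⟨_, (SimpleGraph.Subgraph.coe_adj _ _ _).mp hadj⟩

private lemma card_edge_support {V : Type*} [Fintype V] {G : SimpleGraph V}
    (hacyc : G.IsAcyclic) {F : G.Subgraph} (hc : F.Connected) (he : F.edgeSet.Nonempty) :
    F.edgeSet.toFinset.card + 1 = F.support.toFinset.card := by
  haveI : Fintype ↥F.verts := Fintype.ofFinite _
  haveI : Fintype ↥F.coe.edgeSet := Fintype.ofFinite _
  have htree : F.coe.IsTree :=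
    ⟨SimpleGraph.Subgraph.connected_iff'.mp hc, subgraph_coe_isAcyclic hacyc F⟩
  have hcard := htree.card_edgeFinset
  have e1 : F.coe.edgeFinset.card = F.coe.edgeSet.ncard :=
    (Set.ncard_eq_toFinset_card' _).symm
  have e2 : F.coe.edgeSet.ncard = F.edgeSet.ncard := by
    rw [← F.image_coe_edgeSet_coe]
    exact (Set.ncard_image_of_injective _ (Sym2.map.injective Subtype.val_injective)).symm
  have e3 : F.edgeSet.ncard = F.edgeSet.toFinset.card := Set.ncard_eq_toFinset_card' _
  have v1 : F.support.toFinset.card = F.verts.ncard := by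
    rw [← Set.ncard_eq_toFinset_card', support_eq_verts_of_connected hc he]
  have v2 : F.verts.ncard = Fintype.card ↥F.verts := by
    rw [Set.ncard_eq_toFinset_card', Set.toFinset_card]
  omega

/-- Let `T = (V, G)` be a finite tree and let `𝔽` be a finite nonempty family of
subgraphs of `G` such that each member is connected and has at least one edge, the
edge sets of the members partition the edge set of `G`, and any two distinct members
share at most one vertex (vertex sets being supports, i.e. sets of edge endpoints).
Then some member `F ∈ 𝔽` meets the union of the supports of all other members in at
most one vertex. -/
theorem exists_leaf_full_steiner_subtree {V : Type*} [Fintype V]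
    (G : SimpleGraph V) (hconn : G.Connected) (hacyc : G.IsAcyclic)
    (𝔽 : Finset G.Subgraph) (hne : 𝔽.Nonempty)
    (hmem : ∀ F ∈ 𝔽, F.Connected ∧ F.edgeSet.Nonempty)
    (hcover : ⋃ F ∈ 𝔽, SimpleGraph.Subgraph.edgeSet F = G.edgeSet)
    (hdisj : ∀ F₁ ∈ 𝔽, ∀ F₂ ∈ 𝔽, F₁ ≠ F₂ →
      SimpleGraph.Subgraph.edgeSet F₁ ∩ SimpleGraph.Subgraph.edgeSet F₂ = ∅)
    (hshare : ∀ F₁ ∈ 𝔽, ∀ F₂ ∈ 𝔽, F₁ ≠ F₂ →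
      (F₁.support ∩ F₂.support).Subsingleton) :
    ∃ F ∈ 𝔽, (F.support ∩ ⋃ F' ∈ 𝔽 \ {F}, SimpleGraph.Subgraph.support F').Subsingleton := by
  classical
  by_contra hcon
  push_neg at hcon
  -- notation
  set d : V → ℕ := fun v => (𝔽.filter (fun F => v ∈ F.support)).card with hd
  set S : Finset V := Finset.univ.filter (fun v => 2 ≤ d v) with hS
  -- every vertex has a neighbor in G
  have hadjex : ∀ v : V, ∃ w, G.Adj v w := by
    obtain ⟨F₀, hF₀⟩ := hne
    obtain ⟨e₀, he₀⟩ := (hmem F₀ hF₀).2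
    have he₀G : e₀ ∈ G.edgeSet := F₀.edgeSet_subset he₀
    induction e₀ with
    | h a b =>
      rw [SimpleGraph.mem_edgeSet] at he₀G
      intro v
      by_cases hva : v = a
      · exact ⟨b, hva ▸ he₀G⟩
      · obtain ⟨p⟩ := hconn v a
        exact ⟨_, p.adj_snd (SimpleGraph.Walk.not_nil_of_ne hva)⟩
  -- every vertex lies in the support of some member
  have hd1 : ∀ v : V, 1 ≤ d v := by
    intro v
    obtain ⟨w, hw⟩ := hadjex v
    have : s(v, w) ∈ ⋃ F ∈ 𝔽, SimpleGraph.Subgraph.edgeSet F := hcover ▸ hw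
    obtain ⟨F, hF, hvF⟩ := Set.mem_iUnion₂.mp this
    refine Finset.card_pos.mpr ⟨F, Finset.mem_filter.mpr ⟨hF, ⟨w, ?_⟩⟩⟩
    exact SimpleGraph.Subgraph.mem_edgeSet.mp hvF
  -- each member contains at least two shared vertices
  have hshared2 : ∀ F ∈ 𝔽, 2 ≤ (S.filter (fun v => v ∈ F.support)).card := by
    intro F hF
    have hns := hcon F hF
    obtain ⟨a, ha, b, hb, hab⟩ := hns
    have key : ∀ x, x ∈ F.support ∩ ⋃ F' ∈ 𝔽 \ {F}, SimpleGraph.Subgraph.support F' →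
        x ∈ S.filter (fun v => v ∈ F.support) := by
      intro x hx
      obtain ⟨hxF, hxU⟩ := hx
      obtain ⟨F', hF', hxF'⟩ := Set.mem_iUnion₂.mp hxU
      rw [Finset.mem_sdiff, Finset.mem_singleton] at hF'
      refine Finset.mem_filter.mpr ⟨Finset.mem_filter.mpr ⟨Finset.mem_univ _, ?_⟩, hxF⟩
      calc 2 = ({F, F'} : Finset G.Subgraph).card := by
                rw [Finset.card_insert_of_notMem (by simpa using (Ne.symm hF'.2)),
                  Finset.card_singleton]
        _ ≤ d x := Finset.card_le_card (by
                intro H hH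
                simp only [Finset.mem_insert, Finset.mem_singleton] at hH
                rcases hH with rfl | rfl
                · exact Finset.mem_filter.mpr ⟨hF, hxF⟩
                · exact Finset.mem_filter.mpr ⟨hF'.1, hxF'⟩)
    exact Finset.one_lt_card.mpr ⟨a, key a ha, b, key b hb, hab⟩
  -- double counting: incidences over S
  have hdouble : ∀ (T : Finset V),
      (∑ F ∈ 𝔽, (T.filter (fun v => v ∈ F.support)).card)
        = ∑ v ∈ T, (𝔽.filter (fun F => v ∈ F.support)).card := by
    intro T
    simp only [Finset.card_filter]
    exact Finset.sum_comm
  -- edge partition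
  have hpart : ∑ F ∈ 𝔽, F.edgeSet.toFinset.card = G.edgeFinset.card := by
    rw [← Finset.card_biUnion]
    · congr 1
      ext e
      simp only [Finset.mem_biUnion, Set.mem_toFinset, SimpleGraph.mem_edgeFinset, ← hcover,
        Set.mem_iUnion₂]
      tauto
    · intro F₁ h₁ F₂ h₂ hne'
      rw [Function.onFun, Finset.disjoint_left]
      intro e he₁ he₂
      have := hdisj F₁ h₁ F₂ h₂ hne'
      rw [Set.mem_toFinset] at he₁ he₂
      exact absurd this (by rw [Set.eq_empty_iff_forall_notMem]; push_neg; exact ⟨e, he₁, he₂⟩)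
  -- tree counts
  have htreeG : G.edgeFinset.card + 1 = Fintype.card V :=
    SimpleGraph.IsTree.card_edgeFinset ⟨hconn, hacyc⟩
  have hAs : ∀ F ∈ 𝔽, F.edgeSet.toFinset.card + 1 = F.support.toFinset.card := fun F hF =>
    card_edge_support hacyc (hmem F hF).1 (hmem F hF).2
  -- sum of support sizes
  have hsupsum : ∑ F ∈ 𝔽, F.support.toFinset.card = ∑ v : V, d v := by
    have : ∀ F : G.Subgraph, F.support.toFinset =
        Finset.univ.filter (fun v => v ∈ F.support) := by
      intro F; ext v; simp
    simp only [this]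
    exact hdouble Finset.univ
  have hsum1 : ∑ v : V, d v + 1 = 𝔽.card + Fintype.card V := by
    have : ∑ F ∈ 𝔽, F.support.toFinset.card
        = ∑ F ∈ 𝔽, (F.edgeSet.toFinset.card + 1) := by
      exact Finset.sum_congr rfl (fun F hF => (hAs F hF).symm)
    rw [← hsupsum, this, Finset.sum_add_distrib, Finset.sum_const, smul_eq_mul, mul_one,
      hpart]
    omega
  -- split over S and its complement
  have hsplit : ∑ v : V, d v = ∑ v ∈ S, d v + ∑ v ∈ Sᶜ, d v := by
    rw [← Finset.sum_add_sum_compl S]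
  have hcompl : ∑ v ∈ Sᶜ, d v = Sᶜ.card := by
    rw [Finset.card_eq_sum_ones]
    refine Finset.sum_congr rfl (fun v hv => ?_)
    have h2 : ¬ (2 ≤ d v) := by
      rw [Finset.mem_compl, hS] at hv
      simpa using hv
    have := hd1 v
    omega
  have hcardsplit : S.card + Sᶜ.card = Fintype.card V := by
    rw [Finset.card_add_card_compl]
  -- key inequalities
  have hX1 : ∑ v ∈ S, d v + 1 = 𝔽.card + S.card := by omega
  have hX2 : 2 * S.card ≤ ∑ v ∈ S, d v := by
    calc 2 * S.card = S.card * 2 := by ring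
      _ = ∑ _v ∈ S, 2 := by rw [Finset.sum_const, smul_eq_mul]
      _ ≤ ∑ v ∈ S, d v := Finset.sum_le_sum (fun v hv => by
          rw [hS, Finset.mem_filter] at hv; exact hv.2)
  have hX3 : 2 * 𝔽.card ≤ ∑ v ∈ S, d v := by
    calc 2 * 𝔽.card = 𝔽.card * 2 := by ring
      _ = ∑ _F ∈ 𝔽, 2 := by rw [Finset.sum_const, smul_eq_mul]
      _ ≤ ∑ F ∈ 𝔽, (S.filter (fun v => v ∈ F.support)).card :=
          Finset.sum_le_sum hshared2
      _ = ∑ v ∈ S, d v := hdouble S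
  omega
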